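/- Let ι be a type, E : ι → ℝ, and λ ∈ ℝ. Let B ≥ 2 and suppose a family G assigns a real number G(τ₁|…|τ_B) to every B-tuple of nonempty finite tuples τ_β = (a^β₁,…,a^β_{N_β}) of indices whose values E² are pairwise distinct (across all entries), such that: (i) G is invariant under permutations of the B tuples; (ii) whenever N₁ ≥ 2, G((a¹₁,a¹₂,…,a¹_{N₁})|τ₂|…|τ_B) = λ·(G((a¹₁,a¹₃,…,a¹_{N₁})|τ₂|…|τ_B) − G((a¹₂,a¹₃,…,a¹_{N₁})|τ₂|…|τ_B))/(E_{a¹₁}² − E_{a¹₂}²). Then G(τ₁|…|τ_B) = λ^{N₁+⋯+N_B−B}·Σ_{k₁=1}^{N₁}⋯Σ_{k_B=1}^{N_B} G((a¹_{k₁})|(a²_{k₂})|…|(a^B_{k_B}))·∏_{β=1}^B ∏_{l=1, l≠k_β}^{N_β} 1/(E_{a^β_{k_β}}² − E_{a^β_l}²). -/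

import Mathlib

open Finset


section Aux
variable {ι : Type*}

private noncomputable def wgt (E : ι → ℝ) (l : List ι) (j : Fin l.length) : ℝ :=
  ∏ u ∈ Finset.univ.erase j, (E (l.get j) ^ 2 - E (l.get u) ^ 2)⁻¹

private lemma prod_erase_eq {n : ℕ} (g : Fin (n + 1) → ℝ) (p : Fin (n + 1)) :
    ∏ u ∈ Finset.univ.erase p, g u = ∏ u : Fin n, g (p.succAbove u) := by
  rw [Fin.univ_succAbove n p, Finset.erase_cons, Finset.prod_map]
  rfl

private lemma wgt_cons_zero (E : ι → ℝ) (x : ι) (l : List ι) :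
    wgt E (x :: l) (0 : Fin (l.length + 1)) = ∏ u : Fin l.length, (E x ^ 2 - E (l.get u) ^ 2)⁻¹ := by
  refine Eq.trans (prod_erase_eq (n := l.length)
    (fun u => (E ((x :: l).get (0 : Fin (l.length + 1))) ^ 2 - E ((x :: l).get u) ^ 2)⁻¹) 0) ?_
  refine Finset.prod_congr rfl fun u _ => ?_
  rw [Fin.zero_succAbove]
  rfl

private lemma wgt_cons_succ (E : ι → ℝ) (x : ι) (l : List ι) (j : Fin l.length) :
    wgt E (x :: l) j.succ = (E (l.get j) ^ 2 - E x ^ 2)⁻¹ * wgt E l j := by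
  cases l with
  | nil => exact j.elim0
  | cons z l' =>
    have hr : wgt E (z :: l') j
        = ∏ v : Fin l'.length, (E ((z :: l').get j) ^ 2 - E ((z :: l').get (j.succAbove v)) ^ 2)⁻¹ :=
      prod_erase_eq (n := l'.length) _ j
    refine Eq.trans (prod_erase_eq (n := (z :: l').length)
      (fun u => (E ((x :: z :: l').get j.succ) ^ 2 - E ((x :: z :: l').get u) ^ 2)⁻¹) j.succ) ?_
    refine Eq.trans (Fin.prod_univ_succ (n := l'.length) _) ?_
    rw [hr]
    congr 1
    · refine Finset.prod_congr rfl fun v _ => ?_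
      rw [Fin.succ_succAbove_succ j v]
      rfl

private lemma w1 (E : ι → ℝ) (x y : ι) (r : List ι) :
    wgt E (x :: y :: r) (0 : Fin (r.length + 1 + 1)) =
      (E x ^ 2 - E y ^ 2)⁻¹ * ∏ u : Fin r.length, (E x ^ 2 - E (r.get u) ^ 2)⁻¹ := by
  have h1 := wgt_cons_zero E x (y :: r)
  have h2 := Fin.prod_univ_succ (n := r.length)
    (fun u : Fin (r.length + 1) => (E x ^ 2 - E ((y :: r).get u) ^ 2)⁻¹)
  exact h1.trans (h2.trans (by rfl))

private lemma w2 (E : ι → ℝ) (x y : ι) (r : List ι) :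
    wgt E (x :: y :: r) (Fin.succ (0 : Fin (r.length + 1))) =
      (E y ^ 2 - E x ^ 2)⁻¹ * ∏ u : Fin r.length, (E y ^ 2 - E (r.get u) ^ 2)⁻¹ := by
  have h1 := wgt_cons_succ E x (y :: r) (0 : Fin (r.length + 1))
  rw [wgt_cons_zero E y r] at h1
  exact h1

private lemma w3 (E : ι → ℝ) (x y : ι) (r : List ι) (u : Fin r.length) :
    wgt E (x :: y :: r) u.succ.succ =
      (E (r.get u) ^ 2 - E x ^ 2)⁻¹ * ((E (r.get u) ^ 2 - E y ^ 2)⁻¹ * wgt E r u) := by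
  have h1 := wgt_cons_succ E x (y :: r) u.succ
  rw [wgt_cons_succ E y r u] at h1
  exact h1

end Aux


section Aux2
variable {ι : Type*}

private lemma flatten_ofFn_cons {m : ℕ} (L : List ι) (T : Fin m → List ι) :
    (List.ofFn (Fin.cons (α := fun _ => List ι) L T)).flatten = L ++ (List.ofFn T).flatten := by
  rw [List.ofFn_succ]
  simp only [Fin.cons_zero, Fin.cons_succ, List.flatten_cons]

private lemma flatten_ofFn_singleton : ∀ {m : ℕ} (f : Fin m → ι),
    (List.ofFn fun β => [f β]).flatten = List.ofFn f := by
  intro m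
  induction m with
  | zero => intro f; rfl
  | succ n ih =>
    intro f
    rw [List.ofFn_succ (f := fun β => [f β]), List.flatten_cons, ih (fun i => f i.succ),
      List.ofFn_succ (f := f)]
    rfl

private lemma forall₂_aux : ∀ {l1 : List ι} {l2 : List (List ι)},
    List.Forall₂ (· ∈ ·) l1 l2 → l1.Sublist l2.flatten := by
  intro l1 l2 h
  induction h with
  | nil => simp
  | @cons a b l1' l2' ha _ ih =>
    rw [List.flatten_cons]
    exact ((List.singleton_sublist.mpr ha).append ih : ([a] ++ l1').Sublist _)

private lemma sel_sublist {B : ℕ} (τ : Fin B → List ι) (k : ∀ β, Fin ((τ β).length)) :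
    (List.ofFn fun β => (τ β).get (k β)).Sublist (List.ofFn τ).flatten := by
  refine forall₂_aux ?_
  rw [List.forall₂_iff_get]
  refine ⟨by simp, fun i h1 h2 => ?_⟩
  rw [List.get_ofFn, List.get_ofFn]
  exact List.get_mem _ _

private lemma ofFn_comp_perm {B : ℕ} (τ : Fin B → List ι) (σ : Equiv.Perm (Fin B)) :
    (List.ofFn (τ ∘ σ)).Perm (List.ofFn τ) := by
  rw [List.ofFn_eq_map, List.ofFn_eq_map]
  have h : (List.map (⇑σ) (List.finRange B)).Perm (List.finRange B) := by
    refine List.perm_of_nodup_nodup_toFinset_eq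
      ((List.nodup_finRange B).map σ.injective) (List.nodup_finRange B) ?_
    ext a
    simp only [List.mem_toFinset, List.mem_map, List.mem_finRange, true_and, iff_true]
    exact ⟨σ.symm a, σ.apply_symm_apply a⟩
  have h2 := h.map τ
  rw [List.map_map] at h2
  exact h2

private lemma pull_const {α : Type*} [Fintype α] (g w : α → ℝ) (c q : ℝ) :
    ∑ m, g m * ((c * q) * w m) = (∑ m, g m * (q * w m)) * c := by
  rw [Finset.sum_mul]
  exact Finset.sum_congr rfl fun m _ => by ring

private lemma pull_const_neg {α : Type*} [Fintype α] (g w : α → ℝ) (c c' q : ℝ) (hc : c' = -c) :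
    ∑ m, g m * ((c' * q) * w m) = -((∑ m, g m * (q * w m)) * c) := by
  subst hc
  rw [Finset.sum_mul, ← Finset.sum_neg_distrib]
  exact Finset.sum_congr rfl fun m _ => by ring

private lemma pull_sub₃ {α : Type*} [Fintype α] {n : ℕ} (g : Fin n → α → ℝ) (w : α → ℝ)
    (v p q : Fin n → ℝ) (D : ℝ) (key : ∀ u, p u * q u = (p u - q u) * D) :
    ∑ u, ∑ m, g u m * ((p u * (q u * v u)) * w m)
      = (∑ u, ∑ m, g u m * ((p u * v u) * w m)) * D
        - (∑ u, ∑ m, g u m * ((q u * v u) * w m)) * D := by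
  rw [Finset.sum_mul, Finset.sum_mul, ← Finset.sum_sub_distrib]
  refine Finset.sum_congr rfl fun u _ => ?_
  rw [Finset.sum_mul, Finset.sum_mul, ← Finset.sum_sub_distrib]
  refine Finset.sum_congr rfl fun m _ => ?_
  linear_combination (g u m * (v u * w m)) * key u

end Aux2

section Aux3
variable {ι : Type*}

private lemma sum_split {b : ℕ} (E : ι → ℝ) (G : (Fin (b + 2) → List ι) → ℝ)
    (L : List ι) (T : Fin (b + 1) → List ι) :
    (∑ k : (β : Fin (b + 2)) → Fin ((Fin.cons (α := fun _ => List ι) L T β).length),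
        G (fun β => [(Fin.cons (α := fun _ => List ι) L T β).get (k β)]) *
          ∏ β, ∏ l ∈ Finset.univ.erase (k β),
            (E ((Fin.cons (α := fun _ => List ι) L T β).get (k β)) ^ 2 -
              E ((Fin.cons (α := fun _ => List ι) L T β).get l) ^ 2)⁻¹)
      = ∑ j : Fin L.length, ∑ m : (i : Fin (b + 1)) → Fin ((T i).length),
          G (Fin.cons (α := fun _ => List ι) [L.get j] fun i => [(T i).get (m i)]) *
            (wgt E L j * ∏ i, wgt E (T i) (m i)) := by
  have step1 : (∑ k : (β : Fin (b + 2)) → Fin ((Fin.cons (α := fun _ => List ι) L T β).length),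
        G (fun β => [(Fin.cons (α := fun _ => List ι) L T β).get (k β)]) *
          ∏ β, ∏ l ∈ Finset.univ.erase (k β),
            (E ((Fin.cons (α := fun _ => List ι) L T β).get (k β)) ^ 2 -
              E ((Fin.cons (α := fun _ => List ι) L T β).get l) ^ 2)⁻¹)
      = ∑ p : Fin L.length × ((i : Fin (b + 1)) → Fin ((T i).length)),
          G (Fin.cons (α := fun _ => List ι) [L.get p.1] fun i => [(T i).get (p.2 i)]) *
            (wgt E L p.1 * ∏ i, wgt E (T i) (p.2 i)) := by
    refine Fintype.sum_equiv
      (Fin.consEquiv fun β => Fin ((Fin.cons (α := fun _ => List ι) L T β).length)).symm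
      _ _ fun k => ?_
    show G (fun β => [(Fin.cons (α := fun _ => List ι) L T β).get (k β)]) *
        (∏ β, ∏ l ∈ Finset.univ.erase (k β),
          (E ((Fin.cons (α := fun _ => List ι) L T β).get (k β)) ^ 2 -
            E ((Fin.cons (α := fun _ => List ι) L T β).get l) ^ 2)⁻¹)
      = G (Fin.cons (α := fun _ => List ι) [L.get (k 0)] fun i => [(T i).get (k i.succ)]) *
        (wgt E L (k 0) * ∏ i, wgt E (T i) (k i.succ))
    congr 1
    · exact congrArg G (funext fun β => Fin.cases rfl (fun i => rfl) β)
    · exact Eq.trans (Fin.prod_univ_succ _) rfl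
  rw [step1, Fintype.sum_prod_type]

private lemma sum_split1 {b : ℕ} (E : ι → ℝ) (G : (Fin (b + 2) → List ι) → ℝ)
    (x : ι) (r : List ι) (T : Fin (b + 1) → List ι) :
    (∑ k : (β : Fin (b + 2)) → Fin ((Fin.cons (α := fun _ => List ι) (x :: r) T β).length),
        G (fun β => [(Fin.cons (α := fun _ => List ι) (x :: r) T β).get (k β)]) *
          ∏ β, ∏ l ∈ Finset.univ.erase (k β),
            (E ((Fin.cons (α := fun _ => List ι) (x :: r) T β).get (k β)) ^ 2 -
              E ((Fin.cons (α := fun _ => List ι) (x :: r) T β).get l) ^ 2)⁻¹)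
      = (∑ m : (i : Fin (b + 1)) → Fin ((T i).length),
          G (Fin.cons (α := fun _ => List ι) [x] fun i => [(T i).get (m i)]) *
            ((∏ u : Fin r.length, (E x ^ 2 - E (r.get u) ^ 2)⁻¹) * ∏ i, wgt E (T i) (m i)))
      + ∑ u : Fin r.length, ∑ m : (i : Fin (b + 1)) → Fin ((T i).length),
          G (Fin.cons (α := fun _ => List ι) [r.get u] fun i => [(T i).get (m i)]) *
            (((E (r.get u) ^ 2 - E x ^ 2)⁻¹ * wgt E r u) * ∏ i, wgt E (T i) (m i)) := by
  rw [sum_split E G (x :: r) T]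
  refine Eq.trans (Fin.sum_univ_succ (n := r.length) _) ?_
  congr 1
  · refine Finset.sum_congr rfl fun m _ => ?_
    rw [wgt_cons_zero E x r]
    rfl
  · refine Finset.sum_congr rfl fun u _ => Finset.sum_congr rfl fun m _ => ?_
    rw [wgt_cons_succ E x r u]
    rfl

private lemma sum_split2 {b : ℕ} (E : ι → ℝ) (G : (Fin (b + 2) → List ι) → ℝ)
    (x y : ι) (r : List ι) (T : Fin (b + 1) → List ι) :
    (∑ k : (β : Fin (b + 2)) → Fin ((Fin.cons (α := fun _ => List ι) (x :: y :: r) T β).length),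
        G (fun β => [(Fin.cons (α := fun _ => List ι) (x :: y :: r) T β).get (k β)]) *
          ∏ β, ∏ l ∈ Finset.univ.erase (k β),
            (E ((Fin.cons (α := fun _ => List ι) (x :: y :: r) T β).get (k β)) ^ 2 -
              E ((Fin.cons (α := fun _ => List ι) (x :: y :: r) T β).get l) ^ 2)⁻¹)
      = (∑ m : (i : Fin (b + 1)) → Fin ((T i).length),
          G (Fin.cons (α := fun _ => List ι) [x] fun i => [(T i).get (m i)]) *
            (((E x ^ 2 - E y ^ 2)⁻¹ * ∏ u : Fin r.length, (E x ^ 2 - E (r.get u) ^ 2)⁻¹) *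
              ∏ i, wgt E (T i) (m i)))
      + ((∑ m : (i : Fin (b + 1)) → Fin ((T i).length),
          G (Fin.cons (α := fun _ => List ι) [y] fun i => [(T i).get (m i)]) *
            (((E y ^ 2 - E x ^ 2)⁻¹ * ∏ u : Fin r.length, (E y ^ 2 - E (r.get u) ^ 2)⁻¹) *
              ∏ i, wgt E (T i) (m i)))
      + ∑ u : Fin r.length, ∑ m : (i : Fin (b + 1)) → Fin ((T i).length),
          G (Fin.cons (α := fun _ => List ι) [r.get u] fun i => [(T i).get (m i)]) *
            (((E (r.get u) ^ 2 - E x ^ 2)⁻¹ * ((E (r.get u) ^ 2 - E y ^ 2)⁻¹ * wgt E r u)) *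
              ∏ i, wgt E (T i) (m i))) := by
  rw [sum_split E G (x :: y :: r) T]
  refine Eq.trans (Fin.sum_univ_succ (n := r.length + 1) _) ?_
  congr 1
  · refine Finset.sum_congr rfl fun m _ => ?_
    rw [w1 E x y r]
    rfl
  · refine Eq.trans (Fin.sum_univ_succ (n := r.length) _) ?_
    congr 1
    · refine Finset.sum_congr rfl fun m _ => ?_
      rw [w2 E x y r]
      rfl
    · refine Finset.sum_congr rfl fun u _ => Finset.sum_congr rfl fun m _ => ?_
      rw [w3 E x y r u]
      rfl

end Aux3




/-- Schwinger–Dyson recursion for correlation functions with `B ≥ 2` boundary components,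
each boundary a nonempty tuple (list) of indices with pairwise distinct `E²`-values across
all entries.  Under permutation symmetry of the boundaries and the recursion
`G((a₁,a₂,…)|…) = λ(G((a₁,a₃,…)|…) − G((a₂,a₃,…)|…))/(E_{a₁}²−E_{a₂}²)`,
every such correlation function reduces to the `(1+⋯+1)`-point functions:
`G(τ₁|…|τ_B) = λ^{ΣN_β−B}·Σ_{k₁,…,k_B} G((a¹_{k₁})|…|(a^B_{k_B}))·∏_β∏_{l≠k_β}
1/(E_{a^β_{k_β}}²−E_{a^β_l}²)`. -/
theorem stmt_6 {ι : Type*} (E : ι → ℝ) (lam : ℝ) (B : ℕ) (hB : 2 ≤ B)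
    (G : (Fin B → List ι) → ℝ)
    (hsym : ∀ τ : Fin B → List ι, (∀ β, τ β ≠ []) →
      (((List.ofFn τ).flatten.map fun a => E a ^ 2).Pairwise (· ≠ ·)) →
      ∀ σ : Equiv.Perm (Fin B), G (τ ∘ σ) = G τ)
    (hrec : ∀ (x y : ι) (r : List ι) (τ : Fin B → List ι), (∀ β, τ β ≠ []) →
      (((List.ofFn τ).flatten.map fun a => E a ^ 2).Pairwise (· ≠ ·)) →
      τ ⟨0, by omega⟩ = x :: y :: r →
      G τ = lam * (G (Function.update τ ⟨0, by omega⟩ (x :: r))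
          - G (Function.update τ ⟨0, by omega⟩ (y :: r))) / (E x ^ 2 - E y ^ 2)) :
    ∀ τ : Fin B → List ι, (∀ β, τ β ≠ []) →
      (((List.ofFn τ).flatten.map fun a => E a ^ 2).Pairwise (· ≠ ·)) →
      G τ = lam ^ ((∑ β, (τ β).length) - B) *
        ∑ k : (β : Fin B) → Fin (τ β).length,
          G (fun β => [(τ β).get (k β)]) *
            ∏ β, ∏ l ∈ Finset.univ.erase (k β),
              (E ((τ β).get (k β)) ^ 2 - E ((τ β).get l) ^ 2)⁻¹ := by
  obtain ⟨b, rfl⟩ : ∃ b, B = b + 2 := ⟨B - 2, by omega⟩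
  suffices H : ∀ N : ℕ, ∀ τ : Fin (b + 2) → List ι, (∑ β, (τ β).length) = N →
      (∀ β, τ β ≠ []) →
      (((List.ofFn τ).flatten.map fun a => E a ^ 2).Pairwise (· ≠ ·)) →
      G τ = lam ^ ((∑ β, (τ β).length) - (b + 2)) *
        ∑ k : (β : Fin (b + 2)) → Fin (τ β).length,
          G (fun β => [(τ β).get (k β)]) *
            ∏ β, ∏ l ∈ Finset.univ.erase (k β),
              (E ((τ β).get (k β)) ^ 2 - E ((τ β).get l) ^ 2)⁻¹ by
    intro τ h1 h2
    exact H _ τ rfl h1 h2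
  intro N
  induction N using Nat.strong_induction_on with
  | _ N IH =>
  intro τ hN hne hdist
  by_cases hall : ∀ β, (τ β).length = 1
  · -- base case: all boundaries are singletons
    have hsum1 : ∑ β, (τ β).length = b + 2 := by
      have h1 : ∑ β, (τ β).length = ∑ _β : Fin (b + 2), 1 :=
        Finset.sum_congr rfl fun β _ => hall β
      simp [h1]
    have hterm : ∀ k : (β : Fin (b + 2)) → Fin ((τ β).length),
        (G (fun β => [(τ β).get (k β)]) *
          ∏ β, ∏ l ∈ Finset.univ.erase (k β),
            (E ((τ β).get (k β)) ^ 2 - E ((τ β).get l) ^ 2)⁻¹) = G τ := by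
      intro k
      have hsel : (fun β => [(τ β).get (k β)]) = τ := by
        funext β
        obtain ⟨aβ, ha⟩ := List.length_eq_one_iff.mp (hall β)
        have hm : (τ β).get (k β) ∈ τ β := List.get_mem _ _
        have hm2 : (τ β).get (k β) ∈ [aβ] := by rw [← ha]; exact hm
        rw [List.mem_singleton.mp hm2]
        exact ha.symm
      have hpr : ∀ β, (∏ l ∈ Finset.univ.erase (k β),
          (E ((τ β).get (k β)) ^ 2 - E ((τ β).get l) ^ 2)⁻¹) = 1 := by
        intro β
        have he : Finset.univ.erase (k β) = ∅ := by
          refine Finset.eq_empty_iff_forall_notMem.mpr fun l hl => ?_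
          have h1 := Finset.ne_of_mem_erase hl
          have hl1 := l.isLt
          have hk1 := (k β).isLt
          have h2 := hall β
          exact h1 (Fin.ext (by omega))
        rw [he, Finset.prod_empty]
      rw [hsel, Finset.prod_eq_one fun β _ => hpr β, mul_one]
    have hsum2 : (∑ k : (β : Fin (b + 2)) → Fin (τ β).length,
        G (fun β => [(τ β).get (k β)]) *
          ∏ β, ∏ l ∈ Finset.univ.erase (k β),
            (E ((τ β).get (k β)) ^ 2 - E ((τ β).get l) ^ 2)⁻¹)
        = ∑ _k : (β : Fin (b + 2)) → Fin (τ β).length, G τ :=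
      Finset.sum_congr rfl fun k _ => hterm k
    have hcard : Fintype.card ((β : Fin (b + 2)) → Fin ((τ β).length)) = 1 := by
      rw [Fintype.card_pi]
      calc ∏ β, Fintype.card (Fin ((τ β).length))
          = ∏ _β : Fin (b + 2), 1 :=
            Finset.prod_congr rfl fun β _ => by rw [Fintype.card_fin, hall β]
        _ = 1 := Finset.prod_const_one
    rw [hsum1, Nat.sub_self, pow_zero, one_mul, hsum2, Finset.sum_const, Finset.card_univ,
      hcard, one_smul]
  · -- inductive step
    push_neg at hall
    obtain ⟨β₀, hβ₀⟩ := hall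
    have hlen2 : 2 ≤ (τ β₀).length := by
      have h1 : (τ β₀).length ≠ 0 := by
        simpa [List.length_eq_zero_iff] using hne β₀
      omega
    set σ : Equiv.Perm (Fin (b + 2)) := Equiv.swap 0 β₀ with hσdef
    have hne' : ∀ β, (τ ∘ σ) β ≠ [] := fun β => hne (σ β)
    have hperm : (List.ofFn (τ ∘ σ)).Perm (List.ofFn τ) := ofFn_comp_perm τ σ
    have hdist' : (((List.ofFn (τ ∘ σ)).flatten.map fun a => E a ^ 2).Pairwise (· ≠ ·)) :=
      (List.Perm.pairwise_iff (fun h => Ne.symm h) ((hperm.flatten).map _)).mpr hdist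
    have hsum' : (∑ β, ((τ ∘ σ) β).length) = ∑ β, (τ β).length :=
      Equiv.sum_comp σ fun β => (τ β).length
    have hG : G (τ ∘ σ) = G τ := hsym τ hne hdist σ
    have hswap0 : (τ ∘ σ) 0 = τ β₀ := congrArg τ (Equiv.swap_apply_left 0 β₀)
    obtain ⟨x, y, r, hxyr⟩ : ∃ x y r, (τ ∘ σ) 0 = x :: y :: r := by
      rw [hswap0]
      cases h : τ β₀ with
      | nil => rw [h] at hlen2; simp at hlen2
      | cons a t =>
        cases t with
        | nil => rw [h] at hlen2; simp at hlen2
        | cons a2 t2 => exact ⟨a, a2, t2, rfl⟩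
    obtain ⟨T, hT⟩ : ∃ T : Fin (b + 1) → List ι,
        τ ∘ σ = Fin.cons (α := fun _ => List ι) (x :: y :: r) T :=
      ⟨Fin.tail (τ ∘ σ), by rw [← hxyr]; exact (Fin.cons_self_tail (τ ∘ σ)).symm⟩
    have hRHS : (∑ k : (β : Fin (b + 2)) → Fin (τ β).length,
          G (fun β => [(τ β).get (k β)]) *
            ∏ β, ∏ l ∈ Finset.univ.erase (k β),
              (E ((τ β).get (k β)) ^ 2 - E ((τ β).get l) ^ 2)⁻¹)
        = ∑ k : (β : Fin (b + 2)) → Fin (((τ ∘ σ) β).length),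
            G (fun β => [((τ ∘ σ) β).get (k β)]) *
              ∏ β, ∏ l ∈ Finset.univ.erase (k β),
                (E (((τ ∘ σ) β).get (k β)) ^ 2 - E (((τ ∘ σ) β).get l) ^ 2)⁻¹ := by
      refine Fintype.sum_equiv (Equiv.piCongrLeft' (fun β => Fin ((τ β).length)) σ.symm)
        _ _ fun k => ?_
      show G (fun β => [(τ β).get (k β)]) *
          (∏ β, ∏ l ∈ Finset.univ.erase (k β),
            (E ((τ β).get (k β)) ^ 2 - E ((τ β).get l) ^ 2)⁻¹)
        = G (fun β => [(τ (σ β)).get (k (σ β))]) *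
          ∏ β, ∏ l ∈ Finset.univ.erase (k (σ β)),
            (E ((τ (σ β)).get (k (σ β))) ^ 2 - E ((τ (σ β)).get l) ^ 2)⁻¹
      have hGs : G ((fun β => [(τ β).get (k β)]) ∘ σ) = G (fun β => [(τ β).get (k β)]) := by
        refine hsym _ (fun β => by simp) ?_ σ
        rw [flatten_ofFn_singleton]
        exact List.Pairwise.sublist (List.Sublist.map _ (sel_sublist τ k)) hdist
      congr 1
      · exact hGs.symm
      · exact (Equiv.prod_comp σ fun β => ∏ l ∈ Finset.univ.erase (k β),
          (E ((τ β).get (k β)) ^ 2 - E ((τ β).get l) ^ 2)⁻¹).symm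
    rw [hT] at hne' hdist' hsum' hG hRHS
    rw [← hG, ← hsum', hRHS]
    -- now the goal is entirely about `Fin.cons (x :: y :: r) T`
    have h0c : (Fin.cons (α := fun _ => List ι) (x :: y :: r) T) ⟨0, by omega⟩ = x :: y :: r := rfl
    have hrecc := hrec x y r _ hne' hdist' h0c
    have hz : (⟨0, by omega⟩ : Fin (b + 2)) = 0 := Fin.ext (by simp)
    rw [hz, Fin.update_cons_zero, Fin.update_cons_zero] at hrecc
    have hflat : (List.ofFn (Fin.cons (α := fun _ => List ι) (x :: y :: r) T)).flatten
        = x :: y :: (r ++ (List.ofFn T).flatten) :=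
      (flatten_ofFn_cons (x :: y :: r) T).trans rfl
    have hdistB := hdist'
    rw [hflat] at hdistB
    have hdistM := hdistB
    rw [List.map_cons, List.map_cons] at hdistM
    obtain ⟨hx1, hd1⟩ := List.pairwise_cons.mp hdistM
    obtain ⟨hy1, _hd2⟩ := List.pairwise_cons.mp hd1
    have hxy : E x ^ 2 ≠ E y ^ 2 := hx1 _ List.mem_cons_self
    have hcr : ∀ u : Fin r.length,
        E (r.get u) ^ 2 ∈ List.map (fun a => E a ^ 2) (r ++ (List.ofFn T).flatten) :=
      fun u => List.mem_map_of_mem (List.mem_append_left _ (List.get_mem _ _))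
    have hxr : ∀ u, E x ^ 2 ≠ E (r.get u) ^ 2 := fun u => hx1 _ (List.mem_cons_of_mem _ (hcr u))
    have hyr : ∀ u, E y ^ 2 ≠ E (r.get u) ^ 2 := fun u => hy1 _ (hcr u)
    have hnex : ∀ z : ι, ∀ β, Fin.cons (α := fun _ => List ι) (z :: r) T β ≠ [] := by
      intro z β
      refine Fin.cases ?_ (fun i => ?_) β
      · simp
      · simpa using hne' i.succ
    have hsubd : ∀ z : ι, (z :: (r ++ (List.ofFn T).flatten)).Sublist
        (x :: y :: (r ++ (List.ofFn T).flatten)) →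
        (((List.ofFn (Fin.cons (α := fun _ => List ι) (z :: r) T)).flatten.map
          fun a => E a ^ 2).Pairwise (· ≠ ·)) := by
      intro z hsub
      rw [(flatten_ofFn_cons (z :: r) T).trans
        (rfl : (z :: r) ++ (List.ofFn T).flatten = z :: (r ++ (List.ofFn T).flatten))]
      exact List.Pairwise.sublist (List.Sublist.map _ hsub) hdistB
    have hdx := hsubd x ((List.sublist_cons_self y (r ++ (List.ofFn T).flatten)).cons₂ x)
    have hdy := hsubd y (List.sublist_cons_self x (y :: (r ++ (List.ofFn T).flatten)))
    have hsumc : (∑ β, ((Fin.cons (α := fun _ => List ι) (x :: y :: r) T) β).length) = N :=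
      hsum'.trans hN
    have hsplit : ∀ L : List ι, (∑ β, ((Fin.cons (α := fun _ => List ι) L T) β).length)
        = L.length + ∑ i, (T i).length := by
      intro L
      rw [Fin.sum_univ_succ]
      rfl
    have hTT : b + 1 ≤ ∑ i, (T i).length := by
      have h1 : ∀ i ∈ (Finset.univ : Finset (Fin (b + 1))), 1 ≤ (T i).length := fun i _ =>
        List.length_pos_iff.mpr (by simpa using hne' i.succ)
      calc b + 1 = ∑ _i : Fin (b + 1), 1 := by simp
        _ ≤ ∑ i, (T i).length := Finset.sum_le_sum h1
    have hNval : r.length + 2 + ∑ i, (T i).length = N := by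
      have h2 := hsplit (x :: y :: r)
      rw [hsumc] at h2
      simp only [List.length_cons] at h2
      omega
    have hsx : (∑ β, ((Fin.cons (α := fun _ => List ι) (x :: r) T) β).length) = N - 1 := by
      have h2 := hsplit (x :: r)
      simp only [List.length_cons] at h2
      omega
    have hsy : (∑ β, ((Fin.cons (α := fun _ => List ι) (y :: r) T) β).length) = N - 1 := by
      have h2 := hsplit (y :: r)
      simp only [List.length_cons] at h2
      omega
    have IHx := IH (N - 1) (by omega) (Fin.cons (α := fun _ => List ι) (x :: r) T)
      hsx (hnex x) hdx
    have IHy := IH (N - 1) (by omega) (Fin.cons (α := fun _ => List ι) (y :: r) T)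
      hsy (hnex y) hdy
    rw [hsx] at IHx
    rw [hsy] at IHy
    have hcomb : (∑ k : (β : Fin (b + 2)) → Fin ((Fin.cons (α := fun _ => List ι) (x :: y :: r) T β).length),
            G (fun β => [(Fin.cons (α := fun _ => List ι) (x :: y :: r) T β).get (k β)]) *
              ∏ β, ∏ l ∈ Finset.univ.erase (k β),
                (E ((Fin.cons (α := fun _ => List ι) (x :: y :: r) T β).get (k β)) ^ 2 -
                  E ((Fin.cons (α := fun _ => List ι) (x :: y :: r) T β).get l) ^ 2)⁻¹)
        = ((∑ k : (β : Fin (b + 2)) → Fin ((Fin.cons (α := fun _ => List ι) (x :: r) T β).length),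
              G (fun β => [(Fin.cons (α := fun _ => List ι) (x :: r) T β).get (k β)]) *
                ∏ β, ∏ l ∈ Finset.univ.erase (k β),
                  (E ((Fin.cons (α := fun _ => List ι) (x :: r) T β).get (k β)) ^ 2 -
                    E ((Fin.cons (α := fun _ => List ι) (x :: r) T β).get l) ^ 2)⁻¹)
          - (∑ k : (β : Fin (b + 2)) → Fin ((Fin.cons (α := fun _ => List ι) (y :: r) T β).length),
              G (fun β => [(Fin.cons (α := fun _ => List ι) (y :: r) T β).get (k β)]) *
                ∏ β, ∏ l ∈ Finset.univ.erase (k β),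
                  (E ((Fin.cons (α := fun _ => List ι) (y :: r) T β).get (k β)) ^ 2 -
                    E ((Fin.cons (α := fun _ => List ι) (y :: r) T β).get l) ^ 2)⁻¹)) * (E x ^ 2 - E y ^ 2)⁻¹ := by
      rw [sum_split2 E G x y r T, sum_split1 E G x r T, sum_split1 E G y r T]
      have hkey : ∀ u : Fin r.length,
          (E (r.get u) ^ 2 - E x ^ 2)⁻¹ * (E (r.get u) ^ 2 - E y ^ 2)⁻¹
            = ((E (r.get u) ^ 2 - E x ^ 2)⁻¹ - (E (r.get u) ^ 2 - E y ^ 2)⁻¹) *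
              (E x ^ 2 - E y ^ 2)⁻¹ := by
        intro u
        have n1 : E (r.get u) ^ 2 - E x ^ 2 ≠ 0 := sub_ne_zero.mpr fun h => hxr u h.symm
        have n2 : E (r.get u) ^ 2 - E y ^ 2 ≠ 0 := sub_ne_zero.mpr fun h => hyr u h.symm
        have n3 : E x ^ 2 - E y ^ 2 ≠ 0 := sub_ne_zero.mpr hxy
        have h4 : (E (r.get u) ^ 2 - E y ^ 2) - (E (r.get u) ^ 2 - E x ^ 2)
            = E x ^ 2 - E y ^ 2 := by ring
        rw [inv_sub_inv n1 n2, h4, div_mul_eq_mul_div, mul_inv_cancel₀ n3, one_div, mul_inv]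
      have hneg : (E y ^ 2 - E x ^ 2)⁻¹ = -(E x ^ 2 - E y ^ 2)⁻¹ := by
        rw [← neg_sub (E x ^ 2) (E y ^ 2), inv_neg]
      have hA : (∑ m : (i : Fin (b + 1)) → Fin ((T i).length),
            G (Fin.cons (α := fun _ => List ι) [x] fun i => [(T i).get (m i)]) *
              (((E x ^ 2 - E y ^ 2)⁻¹ * ∏ u : Fin r.length, (E x ^ 2 - E (r.get u) ^ 2)⁻¹) *
                ∏ i, wgt E (T i) (m i)))
          = (∑ m : (i : Fin (b + 1)) → Fin ((T i).length),
              G (Fin.cons (α := fun _ => List ι) [x] fun i => [(T i).get (m i)]) *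
                ((∏ u : Fin r.length, (E x ^ 2 - E (r.get u) ^ 2)⁻¹) *
                  ∏ i, wgt E (T i) (m i))) * (E x ^ 2 - E y ^ 2)⁻¹ :=
        pull_const _ _ _ _
      have hB : (∑ m : (i : Fin (b + 1)) → Fin ((T i).length),
            G (Fin.cons (α := fun _ => List ι) [y] fun i => [(T i).get (m i)]) *
              (((E y ^ 2 - E x ^ 2)⁻¹ * ∏ u : Fin r.length, (E y ^ 2 - E (r.get u) ^ 2)⁻¹) *
                ∏ i, wgt E (T i) (m i)))
          = -((∑ m : (i : Fin (b + 1)) → Fin ((T i).length),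
              G (Fin.cons (α := fun _ => List ι) [y] fun i => [(T i).get (m i)]) *
                ((∏ u : Fin r.length, (E y ^ 2 - E (r.get u) ^ 2)⁻¹) *
                  ∏ i, wgt E (T i) (m i))) * (E x ^ 2 - E y ^ 2)⁻¹) :=
        pull_const_neg _ _ _ _ _ hneg
      have hC : (∑ u : Fin r.length, ∑ m : (i : Fin (b + 1)) → Fin ((T i).length),
            G (Fin.cons (α := fun _ => List ι) [r.get u] fun i => [(T i).get (m i)]) *
              (((E (r.get u) ^ 2 - E x ^ 2)⁻¹ * ((E (r.get u) ^ 2 - E y ^ 2)⁻¹ * wgt E r u)) *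
                ∏ i, wgt E (T i) (m i)))
          = (∑ u : Fin r.length, ∑ m : (i : Fin (b + 1)) → Fin ((T i).length),
              G (Fin.cons (α := fun _ => List ι) [r.get u] fun i => [(T i).get (m i)]) *
                (((E (r.get u) ^ 2 - E x ^ 2)⁻¹ * wgt E r u) *
                  ∏ i, wgt E (T i) (m i))) * (E x ^ 2 - E y ^ 2)⁻¹
            - (∑ u : Fin r.length, ∑ m : (i : Fin (b + 1)) → Fin ((T i).length),
              G (Fin.cons (α := fun _ => List ι) [r.get u] fun i => [(T i).get (m i)]) *
                (((E (r.get u) ^ 2 - E y ^ 2)⁻¹ * wgt E r u) *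
                  ∏ i, wgt E (T i) (m i))) * (E x ^ 2 - E y ^ 2)⁻¹ :=
        pull_sub₃ _ _ _ _ _ _ hkey
      linear_combination hA + hB + hC
    rw [hsumc, hrecc, IHx, IHy, hcomb]
    have hexp : N - (b + 2) = (N - 1 - (b + 2)) + 1 := by omega
    rw [hexp, pow_succ, div_eq_mul_inv]
    ring
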